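/- arXiv:2406.00243 — 3 statements merged into one kernel-verified Lean document; each statement's English description precedes it below -/
import Mathlib

section
/- Let $N \geq 2$, let $S \subseteq \{0,\dots,N-1\}^n$, let $1 \leq r < n$, and let $a, b \in \{0,\dots,N-1\}^r$ be distinct. For $x \in \{a,b\}$ define $T_x = \{p \in \{0,\dots,N-1\}^{n-r} : x \times p \in S\}$, where $x \times p$ denotes concatenation. If there is an injective affine map $\iota : \{0,1\}^m \to \mathbb{Z}^{n-r}$ with image contained in $T_a \cap T_b$, then there is an injective affine map $\{0,1\}^{m+1} \to \mathbb{Z}^n$ with image contained in $S$. -/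
open scoped BigOperators

/-- The 0/1 cube in `ℤ^m`. -/
def cube (m : ℕ) : Set (Fin m → ℤ) := {v | ∀ i, v i = 0 ∨ v i = 1}

/-- `S` contains an affine copy of the `m`-dimensional 0/1 cube: there is a map
`ι` which is affine (of the form `y ↦ A y + z` on the cube), injective on the
cube, and whose image of the cube is contained in `S`. -/
def HasCube {n : ℕ} (S : Set (Fin n → ℤ)) (m : ℕ) : Prop :=
  ∃ ι : (Fin m → ℤ) → (Fin n → ℤ),
    (∃ A : Matrix (Fin n) (Fin m) ℤ, ∃ z : Fin n → ℤ, ∀ y ∈ cube m, ι y = A.mulVec y + z) ∧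
    Set.InjOn ι (cube m) ∧ ι '' (cube m) ⊆ S

/-- `M(S)`: the largest `m` such that `S` contains an affine copy of the `m`-cube. -/
noncomputable def Mval {n : ℕ} (S : Set (Fin n → ℤ)) : ℕ := sSup {m | HasCube S m}

/-- The box `{0,1,…,N-1}^n` inside `ℤ^n`. -/
noncomputable def box (N n : ℕ) : Finset (Fin n → ℤ) := Fintype.piFinset fun _ => Finset.Icc 0 ((N : ℤ) - 1)

/-- `f_N(n,c)`: the minimal value of `M(S)` over subsets `S` of the box of density at least `c`. -/
noncomputable def fN (N n : ℕ) (c : ℝ) : ℕ :=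
  sInf {k | ∃ S : Finset (Fin n → ℤ), S ⊆ box N n ∧ c * (N : ℝ) ^ n ≤ S.card ∧
    Mval (S : Set (Fin n → ℤ)) = k}

theorem stmt2 (N r s m : ℕ) (hN : 2 ≤ N) (hr : 1 ≤ r) (hs : 1 ≤ s)
    (S : Set (Fin (r + s) → ℤ)) (hS : S ⊆ (box N (r + s) : Set (Fin (r + s) → ℤ)))
    (a b : Fin r → ℤ) (ha : a ∈ box N r) (hb : b ∈ box N r) (hab : a ≠ b)
    (h : HasCube ({p : Fin s → ℤ | Fin.append a p ∈ S} ∩ {p : Fin s → ℤ | Fin.append b p ∈ S}) m) :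
    HasCube S (m + 1) := by
  classical
  obtain ⟨ι, ⟨A, z, hAz⟩, hinj, himg⟩ := h
  set κ : (Fin (m+1) → ℤ) → (Fin (r+s) → ℤ) := fun y =>
    Fin.append (fun i => a i + y (Fin.last m) * (b i - a i)) (ι (fun j => y j.castSucc))
    with hκ
  have hfront : ∀ y ∈ cube (m+1), (fun j : Fin m => y j.castSucc) ∈ cube m :=
    fun y hy j => hy j.castSucc
  refine ⟨κ, ⟨Matrix.of (fun i j => Fin.addCases
      (fun i' => if j = Fin.last m then b i' - a i' else 0)
      (fun i' => Fin.lastCases 0 (fun j' => A i' j') j) i), Fin.append a z, ?_⟩, ?_, ?_⟩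
  · intro y hy
    have hι := hAz _ (hfront y hy)
    funext i
    refine Fin.addCases (fun i' => ?_) (fun i' => ?_) i
    · simp only [hκ, Pi.add_apply, Fin.append_left, Matrix.mulVec, Matrix.of_apply,
        dotProduct, Fin.addCases_left]
      rw [Finset.sum_congr rfl (fun j _ => (ite_mul _ _ _ _))]
      simp only [zero_mul]
      rw [Finset.sum_ite_eq' Finset.univ (Fin.last m) (fun j => (b i' - a i') * y j)]
      simp; ring
    · simp only [hκ, Pi.add_apply, Fin.append_right, Matrix.mulVec, Matrix.of_apply,
        dotProduct, Fin.addCases_right, hι]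
      rw [Fin.sum_univ_castSucc]
      simp [Matrix.mulVec, dotProduct]
  · intro y hy y' hy' heq
    obtain ⟨i0, hi0⟩ := Function.ne_iff.mp hab
    have h1 : y (Fin.last m) = y' (Fin.last m) := by
      have := congrFun heq (Fin.castAdd s i0)
      simp only [hκ, Fin.append_left] at this
      have hd : b i0 - a i0 ≠ 0 := sub_ne_zero.mpr (Ne.symm hi0)
      have : (y (Fin.last m) - y' (Fin.last m)) * (b i0 - a i0) = 0 := by ring_nf; linarith
      rcases mul_eq_zero.mp this with h' | h'
      · linarith [sub_eq_zero.mp h']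
      · exact absurd h' hd
    have h2 : (fun j : Fin m => y j.castSucc) = (fun j : Fin m => y' j.castSucc) := by
      apply hinj (hfront y hy) (hfront y' hy')
      funext i'
      have := congrFun heq (Fin.natAdd r i')
      simpa [hκ, Fin.append_right] using this
    funext i
    refine Fin.lastCases h1 (fun j => ?_) i
    exact congrFun h2 j
  · rintro _ ⟨y, hy, rfl⟩
    have hι := himg ⟨_, hfront y hy, rfl⟩
    rcases hy (Fin.last m) with h0 | h0
    · have : κ y = Fin.append a (ι (fun j => y j.castSucc)) := by
        simp only [hκ]
        congr 1
        funext i; simp [h0]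
      rw [this]; exact hι.1
    · have : κ y = Fin.append b (ι (fun j => y j.castSucc)) := by
        simp only [hκ]
        congr 1
        funext i; simp [h0]
      rw [this]; exact hι.2
end

section
/- Let $N \geq 2$ and $c \in (0,1]$. Define $f_N(n,c)$ to be the minimum over all $S \subseteq \{0,\dots,N-1\}^n$ with $|S| \geq cN^n$ of $M(S)$, the largest $m$ such that $S$ contains the image of an injective affine map from $\{0,1\}^m$ into $\mathbb{Z}^n$. Then for all $n > \lceil \log_N(8c^{-2}) \rceil$, $f_N(n,c) \geq f_N\big(n - \lceil \log_N(8c^{-2}) \rceil,\ 2c^2(c+4)^{-2}\big) + 1$. -/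
open scoped BigOperators

/-! Auxiliary lemmas -/

lemma card_box (N n : ℕ) : (box N n).card = N ^ n := by
  simp [box, Fintype.card_piFinset]

def cubeFinset (m : ℕ) : Finset (Fin m → ℤ) := Fintype.piFinset fun _ => ({0, 1} : Finset ℤ)

lemma coe_cubeFinset (m : ℕ) : (cubeFinset m : Set (Fin m → ℤ)) = cube m := by
  ext v
  simp [cubeFinset, cube, Fintype.mem_piFinset]

lemma card_cubeFinset (m : ℕ) : (cubeFinset m).card = 2 ^ m := by
  simp [cubeFinset, Fintype.card_piFinset]

lemma hasCube_zero {n : ℕ} {S : Set (Fin n → ℤ)} {s₀ : Fin n → ℤ} (hs : s₀ ∈ S) :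
    HasCube S 0 := by
  refine ⟨fun _ => s₀, ⟨0, s₀, fun y _ => by simp [Matrix.zero_mulVec]⟩, ?_, ?_⟩
  · intro a _ b _ _
    exact Subsingleton.elim a b
  · rintro _ ⟨y, _, rfl⟩
    exact hs

lemma two_pow_le_card {n m : ℕ} {S : Finset (Fin n → ℤ)}
    (h : HasCube (S : Set (Fin n → ℤ)) m) : 2 ^ m ≤ S.card := by
  obtain ⟨ι, -, hinj, hsub⟩ := h
  have hsubst : (cubeFinset m).image ι ⊆ S := by
    intro v hv
    obtain ⟨a, ha, rfl⟩ := Finset.mem_image.mp hv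
    exact hsub ⟨a, by rw [← coe_cubeFinset]; exact_mod_cast ha, rfl⟩
  have hcard : ((cubeFinset m).image ι).card = (cubeFinset m).card := by
    apply Finset.card_image_of_injOn
    intro a ha b hb hab
    exact hinj (by rw [← coe_cubeFinset]; exact_mod_cast ha)
      (by rw [← coe_cubeFinset]; exact_mod_cast hb) hab
  calc 2 ^ m = ((cubeFinset m).image ι).card := by rw [hcard, card_cubeFinset]
    _ ≤ S.card := Finset.card_le_card hsubst

lemma bddAbove_hasCube {n : ℕ} (S : Finset (Fin n → ℤ)) :
    BddAbove {m | HasCube (S : Set (Fin n → ℤ)) m} := by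
  refine ⟨S.card, fun m hm => ?_⟩
  exact le_trans (Nat.lt_two_pow_self (n := m)).le (two_pow_le_card hm)

lemma le_mval {n m : ℕ} (S : Finset (Fin n → ℤ))
    (h : HasCube (S : Set (Fin n → ℤ)) m) : m ≤ Mval (S : Set (Fin n → ℤ)) :=
  le_csSup (bddAbove_hasCube S) h

lemma hasCube_mval {n : ℕ} (S : Finset (Fin n → ℤ)) (hS : S.Nonempty) :
    HasCube (S : Set (Fin n → ℤ)) (Mval (S : Set (Fin n → ℤ))) := by
  obtain ⟨s₀, hs₀⟩ := hS
  have hne : Set.Nonempty {m | HasCube (S : Set (Fin n → ℤ)) m} :=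
    ⟨0, hasCube_zero (Finset.mem_coe.mpr hs₀)⟩
  exact Nat.sSup_mem hne (bddAbove_hasCube S)

/-! Gluing -/

def glue {d m : ℕ} (x : Fin d → ℤ) (t : Fin m → ℤ) : Fin (d + m) → ℤ :=
  Sum.elim x t ∘ finSumFinEquiv.symm

@[simp] lemma glue_castAdd {d m : ℕ} (x : Fin d → ℤ) (t : Fin m → ℤ) (a : Fin d) :
    glue x t (Fin.castAdd m a) = x a := by
  simp [glue]

@[simp] lemma glue_natAdd {d m : ℕ} (x : Fin d → ℤ) (t : Fin m → ℤ) (b : Fin m) :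
    glue x t (Fin.natAdd d b) = t b := by
  simp [glue]

lemma glue_inl {d m : ℕ} (x : Fin d → ℤ) (t : Fin m → ℤ) (a : Fin d) :
    glue x t (finSumFinEquiv (Sum.inl a)) = x a := by
  simp [glue]

lemma glue_inr {d m : ℕ} (x : Fin d → ℤ) (t : Fin m → ℤ) (b : Fin m) :
    glue x t (finSumFinEquiv (Sum.inr b)) = t b := by
  simp [glue]

lemma glue_inj {d m : ℕ} {x x' : Fin d → ℤ} {t t' : Fin m → ℤ}
    (h : glue x t = glue x' t') : x = x' ∧ t = t' := by
  constructor
  · funext a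
    simpa using congrFun h (Fin.castAdd m a)
  · funext b
    simpa using congrFun h (Fin.natAdd d b)

lemma glue_eq_self {d m : ℕ} (v : Fin (d + m) → ℤ) :
    glue (fun a => v (finSumFinEquiv (Sum.inl a))) (fun b => v (finSumFinEquiv (Sum.inr b))) = v := by
  funext i
  rcases h : finSumFinEquiv.symm i with a | b
  · have hi : i = finSumFinEquiv (Sum.inl a) := by rw [← h, Equiv.apply_symm_apply]
    rw [hi, glue_inl]
  · have hi : i = finSumFinEquiv (Sum.inr b) := by rw [← h, Equiv.apply_symm_apply]
    rw [hi, glue_inr]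

lemma mem_box_iff {N n : ℕ} {v : Fin n → ℤ} :
    v ∈ box N n ↔ ∀ i, 0 ≤ v i ∧ v i ≤ (N : ℤ) - 1 := by
  simp [box, Fintype.mem_piFinset, Finset.mem_Icc]

lemma glue_mem_box {N d m : ℕ} {x : Fin d → ℤ} {t : Fin m → ℤ} :
    glue x t ∈ box N (d + m) ↔ x ∈ box N d ∧ t ∈ box N m := by
  simp only [mem_box_iff]
  constructor
  · intro h
    exact ⟨fun a => by simpa using h (Fin.castAdd m a),
           fun b => by simpa using h (Fin.natAdd d b)⟩
  · rintro ⟨h1, h2⟩ i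
    rcases hh : finSumFinEquiv.symm i with a | b
    · have hi : i = finSumFinEquiv (Sum.inl a) := by rw [← hh, Equiv.apply_symm_apply]
      rw [hi, glue_inl]; exact h1 a
    · have hi : i = finSumFinEquiv (Sum.inr b) := by rw [← hh, Equiv.apply_symm_apply]
      rw [hi, glue_inr]; exact h2 b

/-! Lifting -/

lemma hasCube_lift {d m : ℕ} (S : Set (Fin (d + m) → ℤ)) (T : Set (Fin m → ℤ))
    (x x' : Fin d → ℤ) (hxx : x ≠ x')
    (hmem : ∀ t ∈ T, glue x t ∈ S ∧ glue x' t ∈ S)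
    {k : ℕ} (hT : HasCube T k) : HasCube S (k + 1) := by
  obtain ⟨ι, ⟨A, z, hAz⟩, hinj, hsub⟩ := hT
  refine ⟨fun y => glue (fun i => x i + y (Fin.last k) * (x' i - x i)) (ι (y ∘ Fin.castSucc)),
    ?_, ?_, ?_⟩
  · -- affine
    refine ⟨fun i => Sum.elim (fun a => Fin.snoc (fun _ => 0) (x' a - x a))
        (fun b => Fin.snoc (A b) 0) (finSumFinEquiv.symm i), glue x z, fun y hy => ?_⟩
    have hy' : y ∘ Fin.castSucc ∈ cube k := fun j => hy (Fin.castSucc j)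
    funext i
    show glue (fun i => x i + y (Fin.last k) * (x' i - x i)) (ι (y ∘ Fin.castSucc)) i
      = _ + glue x z i
    rcases hh : finSumFinEquiv.symm i with a | b
    · have hi : i = finSumFinEquiv (Sum.inl a) := by rw [← hh, Equiv.apply_symm_apply]
      rw [hi, glue_inl, glue_inl]
      simp only [Matrix.mulVec, dotProduct]
      simp only [Equiv.symm_apply_apply, Sum.elim_inl]
      rw [Fin.sum_univ_castSucc]
      simp only [Fin.snoc_castSucc, Fin.snoc_last, zero_mul, Finset.sum_const_zero]
      ring
    · have hi : i = finSumFinEquiv (Sum.inr b) := by rw [← hh, Equiv.apply_symm_apply]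
      rw [hi, glue_inr, glue_inr, hAz _ hy']
      simp only [Matrix.mulVec, dotProduct]
      simp only [Equiv.symm_apply_apply, Sum.elim_inr]
      rw [Fin.sum_univ_castSucc]
      simp only [Fin.snoc_castSucc, Fin.snoc_last, zero_mul, add_zero]
      rw [Pi.add_apply]
      simp only [Matrix.mulVec, dotProduct]
      rfl
  · -- injective
    intro y hy y' hy' h
    obtain ⟨h1, h2⟩ := glue_inj h
    have hlast : y (Fin.last k) = y' (Fin.last k) := by
      obtain ⟨a, ha⟩ := Function.ne_iff.mp hxx
      have h1a := congrFun h1 a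
      have hsub' : (y (Fin.last k) - y' (Fin.last k)) * (x' a - x a) = 0 := by linarith
      rcases mul_eq_zero.mp hsub' with h' | h'
      · linarith
      · exact absurd (by linarith : x a = x' a) ha
    have hcast : y ∘ Fin.castSucc = y' ∘ Fin.castSucc :=
      hinj (fun j => hy (Fin.castSucc j)) (fun j => hy' (Fin.castSucc j)) h2
    funext i
    induction i using Fin.lastCases with
    | last => exact hlast
    | cast j => exact congrFun hcast j
  · -- image
    rintro _ ⟨y, hy, rfl⟩
    show glue (fun i => x i + y (Fin.last k) * (x' i - x i)) (ι (y ∘ Fin.castSucc)) ∈ S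
    have hy' : y ∘ Fin.castSucc ∈ cube k := fun j => hy (Fin.castSucc j)
    have hTm : ι (y ∘ Fin.castSucc) ∈ T := hsub ⟨_, hy', rfl⟩
    rcases hy (Fin.last k) with h0 | h1
    · have : (fun i => x i + y (Fin.last k) * (x' i - x i)) = x := by
        funext i; rw [h0]; ring
      rw [this]
      exact (hmem _ hTm).1
    · have : (fun i => x i + y (Fin.last k) * (x' i - x i)) = x' := by
        funext i; rw [h1]; ring
      rw [this]
      exact (hmem _ hTm).2

set_option maxHeartbeats 1000000 in
lemma main_step (N : ℕ) (hN : 2 ≤ N) (c : ℝ) (hc0 : 0 < c) (hc1 : c ≤ 1) (d m : ℕ)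
    (hd : 8 / c ^ 2 ≤ (N : ℝ) ^ d) :
    fN N m (2 * c ^ 2 / (c + 4) ^ 2) + 1 ≤ fN N (d + m) c := by
  classical
  set c' : ℝ := 2 * c ^ 2 / (c + 4) ^ 2 with hc'def
  have hNpos : (0:ℝ) < N := by positivity
  have hNd : (0:ℝ) < (N:ℝ) ^ d := by positivity
  have hNm : (0:ℝ) < (N:ℝ) ^ m := by positivity
  have hc2 : c ^ 2 ≤ 1 := by nlinarith
  have h8 : (8:ℝ) ≤ (N:ℝ) ^ d := le_trans (by rw [le_div_iff₀ (by positivity)]; nlinarith) hd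
  have hc'pos : 0 < c' := by rw [hc'def]; positivity
  -- the set defining `fN N (d+m) c` is nonempty
  have hbox_mem : Set.Nonempty {k | ∃ S : Finset (Fin (d+m) → ℤ), S ⊆ box N (d+m) ∧
      c * (N : ℝ) ^ (d+m) ≤ S.card ∧ Mval (S : Set (Fin (d+m) → ℤ)) = k} :=
    ⟨_, ⟨box N (d+m), subset_rfl, by
      rw [card_box]; push_cast
      nlinarith [pow_pos hNpos (d+m)], rfl⟩⟩
  rw [show fN N (d+m) c = sInf {k | ∃ S : Finset (Fin (d+m) → ℤ), S ⊆ box N (d+m) ∧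
      c * (N : ℝ) ^ (d+m) ≤ S.card ∧ Mval (S : Set (Fin (d+m) → ℤ)) = k} from rfl]
  apply le_csInf hbox_mem
  intro k hk
  obtain ⟨S, hSbox, hScard, rfl⟩ := hk
  -- setup
  set B := box N d with hBdef
  set Bm := box N m with hBmdef
  set fib : (Fin d → ℤ) → Finset (Fin m → ℤ) :=
    fun x => Bm.filter (fun t => glue x t ∈ S) with hfib
  set r : (Fin m → ℤ) → ℕ := fun t => (B.filter (fun x => glue x t ∈ S)).card with hr
  set P : Finset ((Fin d → ℤ) × (Fin m → ℤ)) :=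
    (B ×ˢ Bm).filter (fun p => glue p.1 p.2 ∈ S) with hP
  -- Step A : P.card = S.card
  have stepA : P.card = S.card := by
    apply Finset.card_bij (fun p _ => glue p.1 p.2)
    · intro p hp
      exact (Finset.mem_filter.mp hp).2
    · intro p hp q hq h
      obtain ⟨h1, h2⟩ := glue_inj h
      exact Prod.ext h1 h2
    · intro s hs
      have hsbox := hSbox hs
      have hglue : glue (fun a => s (finSumFinEquiv (Sum.inl a)))
          (fun b => s (finSumFinEquiv (Sum.inr b))) ∈ box N (d+m) := by
        rw [glue_eq_self s]; exact hsbox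
      have hmem := glue_mem_box.mp hglue
      refine ⟨(fun a => s (finSumFinEquiv (Sum.inl a)), fun b => s (finSumFinEquiv (Sum.inr b))), ?_, glue_eq_self s⟩
      rw [hP, Finset.mem_filter, Finset.mem_product]
      exact ⟨⟨hmem.1, hmem.2⟩, by rw [glue_eq_self s]; exact hs⟩
  -- Step B : P.card = ∑ t in Bm, r t
  have stepB : P.card = ∑ t ∈ Bm, r t := by
    rw [Finset.card_eq_sum_card_fiberwise (f := Prod.snd) (t := Bm)
      (fun p hp => (Finset.mem_product.mp (Finset.mem_filter.mp hp).1).2)]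
    refine Finset.sum_congr rfl fun t ht => ?_
    refine Finset.card_bij' (fun p _ => p.1) (fun x _ => (x, t)) ?_ ?_ ?_ ?_
    · intro p hp
      simp only [Finset.mem_filter, Finset.mem_product] at hp ⊢
      obtain ⟨⟨⟨h1, h2⟩, h3⟩, h4⟩ := hp
      exact ⟨h1, by rwa [h4] at h3⟩
    · intro x hx
      have hx' := Finset.mem_filter.mp hx
      exact Finset.mem_filter.mpr ⟨Finset.mem_filter.mpr
        ⟨Finset.mem_product.mpr ⟨hx'.1, ht⟩, hx'.2⟩, rfl⟩
    · intro p hp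
      have h4 := (Finset.mem_filter.mp hp).2
      exact Prod.ext rfl h4.symm
    · intro x hx
      rfl
  -- Step C : P.card = ∑ x in B, (fib x).card
  have stepC : P.card = ∑ x ∈ B, (fib x).card := by
    rw [Finset.card_eq_sum_card_fiberwise (f := Prod.fst) (t := B)
      (fun p hp => (Finset.mem_product.mp (Finset.mem_filter.mp hp).1).1)]
    refine Finset.sum_congr rfl fun x hx => ?_
    refine Finset.card_bij' (fun p _ => p.2) (fun t _ => (x, t)) ?_ ?_ ?_ ?_
    · intro p hp
      simp only [hfib, Finset.mem_filter, Finset.mem_product] at hp ⊢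
      obtain ⟨⟨⟨h1, h2⟩, h3⟩, h4⟩ := hp
      exact ⟨h2, by rwa [h4] at h3⟩
    · intro t ht
      rw [hfib] at ht
      have ht' := Finset.mem_filter.mp ht
      exact Finset.mem_filter.mpr ⟨Finset.mem_filter.mpr
        ⟨Finset.mem_product.mpr ⟨hx, ht'.1⟩, ht'.2⟩, rfl⟩
    · intro p hp
      have h4 := (Finset.mem_filter.mp hp).2
      exact Prod.ext h4.symm rfl
    · intro t ht
      rfl
  -- Step D : ∑ pairs card inter = ∑ t, r t * r t
  have hinter : ∀ p : (Fin d → ℤ) × (Fin d → ℤ),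
      ((fib p.1 ∩ fib p.2).card : ℕ) =
        ∑ t ∈ Bm, (if glue p.1 t ∈ S then 1 else 0) * (if glue p.2 t ∈ S then 1 else 0) := by
    intro p
    have : fib p.1 ∩ fib p.2 = Bm.filter (fun t => glue p.1 t ∈ S ∧ glue p.2 t ∈ S) := by
      rw [Finset.filter_and]
    rw [this, Finset.card_filter]
    refine Finset.sum_congr rfl fun t _ => ?_
    by_cases h1 : glue p.1 t ∈ S <;> by_cases h2 : glue p.2 t ∈ S <;> simp [h1, h2]
  have stepD : ∑ p ∈ B ×ˢ B, (fib p.1 ∩ fib p.2).card = ∑ t ∈ Bm, r t * r t := by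
    simp_rw [hinter]
    rw [Finset.sum_comm]
    refine Finset.sum_congr rfl fun t _ => ?_
    have hrt : r t = ∑ x ∈ B, (if glue x t ∈ S then 1 else 0) := Finset.card_filter _ _
    have hsp := Finset.sum_product' (s := B) (t := B)
      (f := fun a b => (if glue a t ∈ S then (1:ℕ) else 0) * (if glue b t ∈ S then 1 else 0))
    rw [hsp, ← Finset.sum_mul_sum, hrt]
  -- Step E : split into diagonal and off-diagonal
  have stepE : ∑ p ∈ B ×ˢ B, (fib p.1 ∩ fib p.2).card
      = S.card + ∑ p ∈ B.offDiag, (fib p.1 ∩ fib p.2).card := by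
    rw [← Finset.diag_union_offDiag B, Finset.sum_union (Finset.disjoint_diag_offDiag B),
      Finset.sum_diag]
    congr 1
    simp only [Finset.inter_self]
    rw [← stepC, stepA]
  -- abbreviations
  set D : ℕ := ∑ p ∈ B.offDiag, (fib p.1 ∩ fib p.2).card with hD
  have keyID : S.card + D = ∑ t ∈ Bm, r t * r t := by rw [← stepE, stepD]
  -- Cauchy-Schwarz over the reals
  have hCS : ((S.card : ℝ)) ^ 2 ≤ (N : ℝ) ^ m * (S.card + D) := by
    have h1 : (∑ t ∈ Bm, (r t : ℝ)) ^ 2 ≤ (Bm.card : ℝ) * ∑ t ∈ Bm, (r t : ℝ) ^ 2 :=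
      sq_sum_le_card_mul_sum_sq
    have h2 : (∑ t ∈ Bm, (r t : ℝ)) = S.card := by
      rw [← stepA, stepB]; push_cast; ring
    have h3 : (∑ t ∈ Bm, (r t : ℝ) ^ 2) = ((S.card + D : ℕ) : ℝ) := by
      rw [keyID]; push_cast; refine Finset.sum_congr rfl fun t _ => ?_; ring
    have h4 : (Bm.card : ℝ) = (N : ℝ) ^ m := by rw [hBmdef, card_box]; push_cast; ring
    rw [h2, h3, h4] at h1
    push_cast at h1 ⊢
    linarith
  -- pigeonhole over the off-diagonal
  have hB2 : 2 ≤ B.card := by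
    rw [hBdef, card_box]
    by_contra hcon
    push_neg at hcon
    have h1 : N ^ d ≤ 1 := by omega
    have h2 : ((N ^ d : ℕ) : ℝ) ≤ 1 := by exact_mod_cast h1
    rw [Nat.cast_pow] at h2
    linarith
  obtain ⟨a, ha, b, hb, hab⟩ := Finset.one_lt_card.mp (by omega : 1 < B.card)
  have hoffne : B.offDiag.Nonempty := ⟨(a, b), Finset.mem_offDiag.mpr ⟨ha, hb, hab⟩⟩
  obtain ⟨p₀, hp₀, hmax⟩ := Finset.exists_max_image B.offDiag
    (fun p => (fib p.1 ∩ fib p.2).card) hoffne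
  have hDle : D ≤ B.card * B.card * (fib p₀.1 ∩ fib p₀.2).card := by
    calc D ≤ B.offDiag.card * (fib p₀.1 ∩ fib p₀.2).card := by
            simpa using Finset.sum_le_card_nsmul _ _ _ fun p hp => hmax p hp
      _ ≤ B.card * B.card * (fib p₀.1 ∩ fib p₀.2).card := by
            apply Nat.mul_le_mul_right
            have hsubOff : B.offDiag ⊆ B ×ˢ B := fun p hp =>
              Finset.mem_product.mpr ⟨(Finset.mem_offDiag.mp hp).1,
                (Finset.mem_offDiag.mp hp).2.1⟩
            calc B.offDiag.card ≤ (B ×ˢ B).card := Finset.card_le_card hsubOff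
              _ = B.card * B.card := Finset.card_product _ _
  -- real arithmetic
  set T : Finset (Fin m → ℤ) := fib p₀.1 ∩ fib p₀.2 with hT
  have hBcard : (B.card : ℝ) = (N : ℝ) ^ d := by rw [hBdef, card_box]; push_cast; ring
  have hTlow : c' * (N : ℝ) ^ m ≤ T.card := by
    set s : ℝ := (S.card : ℝ)
    set Ip : ℝ := (T.card : ℝ)
    have hIp0 : 0 ≤ Ip := Nat.cast_nonneg _
    have hD2 : (D : ℝ) ≤ (N : ℝ) ^ d * (N : ℝ) ^ d * Ip := by
      calc (D : ℝ) ≤ ((B.card * B.card * T.card : ℕ) : ℝ) := Nat.cast_le.mpr hDle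
        _ = (N : ℝ) ^ d * (N : ℝ) ^ d * Ip := by push_cast [hBcard]; ring
    have hs_low : c * ((N : ℝ) ^ d * (N : ℝ) ^ m) ≤ s := by
      rw [← pow_add]; exact hScard
    have hcNd : 8 ≤ c * (N : ℝ) ^ d := by
      have h82 : 8 ≤ c ^ 2 * (N : ℝ) ^ d := by
        rw [div_le_iff₀ (by positivity)] at hd
        linarith
      nlinarith
    have hs0 : 0 ≤ s := Nat.cast_nonneg _
    -- s * (s - N^m) ≥ cN^dN^m (cN^dN^m - N^m)
    have hmul : (c * ((N:ℝ)^d * (N:ℝ)^m)) * (c * ((N:ℝ)^d * (N:ℝ)^m) - (N:ℝ)^m)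
        ≤ s * (s - (N:ℝ)^m) := by
      apply mul_le_mul hs_low (by linarith) ?_ hs0
      nlinarith
    have hCS' : s * (s - (N:ℝ)^m) ≤ (N:ℝ)^m * (D : ℝ) := by
      have h5 : s ^ 2 ≤ (N : ℝ) ^ m * (s + (D:ℝ)) := hCS
      nlinarith [h5]
    have hDlow : c * (N:ℝ)^d * (c * (N:ℝ)^d - 1) * (N:ℝ)^m ≤ (D : ℝ) := by
      have h := hmul.trans hCS'
      have hexp : (c * ((N:ℝ)^d * (N:ℝ)^m)) * (c * ((N:ℝ)^d * (N:ℝ)^m) - (N:ℝ)^m)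
          = (N:ℝ)^m * (c * (N:ℝ)^d * (c * (N:ℝ)^d - 1) * (N:ℝ)^m) := by ring
      rw [hexp] at h
      exact le_of_mul_le_mul_left h hNm
    have hIp_low : (c^2 - c / (N:ℝ)^d) * (N:ℝ)^m ≤ Ip := by
      have h := hDlow.trans hD2
      have hexp : c * (N:ℝ)^d * (c * (N:ℝ)^d - 1) * (N:ℝ)^m
          = (N:ℝ)^d * (N:ℝ)^d * ((c^2 - c / (N:ℝ)^d) * (N:ℝ)^m) := by
        field_simp
      rw [hexp] at h
      have := le_of_mul_le_mul_left (by
        calc (N:ℝ)^d * ((N:ℝ)^d * ((c^2 - c / (N:ℝ)^d) * (N:ℝ)^m))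
            = (N:ℝ)^d * (N:ℝ)^d * ((c^2 - c / (N:ℝ)^d) * (N:ℝ)^m) := by ring
          _ ≤ (N:ℝ)^d * (N:ℝ)^d * Ip := h
          _ = (N:ℝ)^d * ((N:ℝ)^d * Ip) := by ring) hNd
      exact le_of_mul_le_mul_left this hNd
    have hfinal : c' ≤ c^2 - c / (N:ℝ)^d := by
      have h82 : 8 ≤ c ^ 2 * (N:ℝ)^d := by
        rw [div_le_iff₀ (by positivity)] at hd
        linarith
      have hdiv : c / (N:ℝ)^d ≤ c^3 / 8 := by
        rw [div_le_div_iff₀ hNd (by norm_num)]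
        nlinarith [mul_le_mul_of_nonneg_left h82 hc0.le]
      have hc3 : c ^ 3 ≤ 1 := by nlinarith
      have hc5 : c ^ 2 * c ^ 3 ≤ c ^ 2 * 1 := by
        apply mul_le_mul_of_nonneg_left hc3 (sq_nonneg c)
      have hc3nn : 0 ≤ c ^ 3 := by positivity
      have : c' ≤ c^2 - c^3/8 := by
        rw [hc'def, div_le_iff₀ (by positivity)]
        nlinarith [sq_nonneg c, hc5, hc3nn]
      linarith
    calc c' * (N:ℝ)^m ≤ (c^2 - c / (N:ℝ)^d) * (N:ℝ)^m := by
          apply mul_le_mul_of_nonneg_right hfinal (le_of_lt hNm)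
      _ ≤ Ip := hIp_low
  -- T is nonempty
  have hTne : T.Nonempty := by
    rw [← Finset.card_pos]
    by_contra hcon
    push_neg at hcon
    have : T.card = 0 := by omega
    rw [this] at hTlow
    simp only [Nat.cast_zero] at hTlow
    nlinarith
  have hTsub : T ⊆ Bm := (Finset.inter_subset_left).trans (Finset.filter_subset _ _)
  -- conclusion
  obtain ⟨hp1B, hp2B, hp12⟩ := Finset.mem_offDiag.mp hp₀
  have hfN : fN N m c' ≤ Mval (T : Set (Fin m → ℤ)) := by
    apply Nat.sInf_le
    exact ⟨T, hTsub, hTlow, rfl⟩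
  have hHC : HasCube (T : Set (Fin m → ℤ)) (Mval (T : Set (Fin m → ℤ))) :=
    hasCube_mval T hTne
  have hmemT : ∀ t ∈ (T : Set (Fin m → ℤ)), glue p₀.1 t ∈ (S : Set (Fin (d+m) → ℤ)) ∧
      glue p₀.2 t ∈ (S : Set (Fin (d+m) → ℤ)) := by
    intro t ht
    have ht' : t ∈ T := ht
    rw [hT, Finset.mem_inter, hfib] at ht'
    exact ⟨(Finset.mem_filter.mp ht'.1).2, (Finset.mem_filter.mp ht'.2).2⟩
  have hlift : HasCube (S : Set (Fin (d+m) → ℤ)) (Mval (T : Set (Fin m → ℤ)) + 1) :=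
    hasCube_lift _ _ p₀.1 p₀.2 hp12 hmemT hHC
  have hfinal2 : Mval (T : Set (Fin m → ℤ)) + 1 ≤ Mval (S : Set (Fin (d+m) → ℤ)) :=
    le_mval S hlift
  omega

theorem stmt5 (N : ℕ) (hN : 2 ≤ N) (c : ℝ) (hc0 : 0 < c) (hc1 : c ≤ 1) (n : ℕ)
    (hn : ⌈Real.logb N (8 / c ^ 2)⌉₊ < n) :
    fN N (n - ⌈Real.logb N (8 / c ^ 2)⌉₊) (2 * c ^ 2 / (c + 4) ^ 2) + 1 ≤ fN N n c := by
  set d := ⌈Real.logb N (8 / c ^ 2)⌉₊ with hddef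
  have hN2 : (2:ℝ) ≤ (N:ℝ) := by exact_mod_cast hN
  have hN1 : (1:ℝ) < N := by linarith
  have hpos : (0:ℝ) < 8 / c ^ 2 := by positivity
  have hdpow : 8 / c ^ 2 ≤ (N:ℝ) ^ d := by
    have h1 : Real.logb N (8 / c ^ 2) ≤ (d : ℝ) := Nat.le_ceil _
    have h2 : (8 / c ^ 2) = (N:ℝ) ^ Real.logb N (8 / c ^ 2) :=
      (Real.rpow_logb (by linarith) (by linarith) hpos).symm
    calc 8 / c ^ 2 = (N:ℝ) ^ Real.logb N (8/c^2) := h2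
      _ ≤ (N:ℝ) ^ (d:ℝ) := Real.rpow_le_rpow_of_exponent_le (le_of_lt hN1) h1
      _ = (N:ℝ) ^ d := Real.rpow_natCast _ _
  obtain ⟨m, rfl⟩ : ∃ m, n = d + m := ⟨n - d, by omega⟩
  have hsub : d + m - d = m := by omega
  rw [hsub]
  exact main_step N hN c hc0 hc1 d m hdpow
end

section
/- Let $N \geq 2$ and let $c_n \in (0,1]$ be a sequence with $c_n^{1/n} \to 1$ as $n \to \infty$. Then $f_N(n, c_n) \to \infty$ as $n \to \infty$, where $f_N(n,c)$ is the minimum of $M(S)$ over $S \subseteq \{0,\dots,N-1\}^n$ with $|S| \geq cN^n$. -/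
open scoped BigOperators

lemma box_card (N n : ℕ) (hN : 1 ≤ N) : (box N n).card = N ^ n := by
  rw [box, Fintype.card_piFinset]
  have : (Finset.Icc (0:ℤ) ((N:ℤ) - 1)).card = N := by
    rw [Int.card_Icc]; omega
  simp [this]

noncomputable def PB (N k t : ℕ) : Finset (Fin t → Fin k → ℤ) := Fintype.piFinset fun _ => box N k

lemma PB_card (N k t : ℕ) (hN : 1 ≤ N) : (PB N k t).card = (N ^ k) ^ t := by
  rw [PB, Fintype.card_piFinset]
  simp [box_card N k hN]

lemma core (N k : ℕ) (hN : 2 ≤ N) (hk : 1 ≤ k) :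
    ∀ m t : ℕ, m ≤ t → ∀ γ : ℝ, 0 < γ →
    (2:ℝ)^(2^m) ≤ γ^(2^m) * (N:ℝ)^k →
    ∀ S : Finset (Fin t → Fin k → ℤ), S ⊆ PB N k t →
    γ * ((N:ℝ)^k)^t ≤ S.card →
    ∃ (z : Fin t → Fin k → ℤ) (d : Fin m → Fin t → Fin k → ℤ),
      (∀ y ∈ cube m, (z + ∑ i, y i • d i) ∈ S) ∧
      Set.InjOn (fun y : Fin m → ℤ => z + ∑ i, y i • d i) (cube m) := by
  intro m
  induction m with
  | zero =>
    intro t _ γ hγ _ S _ hcard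
    have hQ0 : (0:ℝ) < ((N:ℝ)^k)^t := by positivity
    have hpos : (0:ℝ) < S.card := lt_of_lt_of_le (by positivity) hcard
    have hne : S.Nonempty := Finset.card_pos.mp (by exact_mod_cast hpos)
    obtain ⟨z, hz⟩ := hne
    refine ⟨z, finZeroElim, ?_, ?_⟩
    · intro y _; simpa using hz
    · intro y _ y' _ _
      funext i; exact i.elim0
  | succ m IH =>
    intro t hmt γ hγ hcond S hSP hcard
    obtain ⟨t', rfl⟩ : ∃ t'', t = t'' + 1 := ⟨t - 1, by omega⟩
    have hmt' : m ≤ t' := by omega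
    set Q : ℝ := (N:ℝ)^k with hQdef
    have hQ1 : (1:ℝ) ≤ Q := one_le_pow₀ (by exact_mod_cast Nat.one_le_of_lt hN)
    have hQ0 : (0:ℝ) < Q := lt_of_lt_of_le one_pos hQ1
    classical
    -- fibers
    let Sa : (Fin k → ℤ) → Finset (Fin t' → Fin k → ℤ) :=
      fun a => (S.filter fun s => s 0 = a).image Fin.tail
    have hmemSa : ∀ a x, x ∈ Sa a ↔ Fin.cons a x ∈ S := by
      intro a x
      constructor
      · rintro hx
        obtain ⟨s, hs, rfl⟩ := Finset.mem_image.mp hx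
        obtain ⟨hsS, hs0⟩ := Finset.mem_filter.mp hs
        rw [← hs0, Fin.cons_self_tail]
        exact hsS
      · intro hx
        exact Finset.mem_image.mpr ⟨Fin.cons a x, Finset.mem_filter.mpr ⟨hx, Fin.cons_zero _ _⟩,
          Fin.tail_cons _ _⟩
    have hSaPB : ∀ a, Sa a ⊆ PB N k t' := by
      intro a x hx
      have h2 := hSP ((hmemSa a x).mp hx)
      rw [PB, Fintype.mem_piFinset] at h2 ⊢
      intro i
      have := h2 i.succ
      rwa [Fin.cons_succ] at this
    have hSacard : ∀ a, (Sa a).card = (S.filter fun s => s 0 = a).card := by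
      intro a
      apply Finset.card_image_of_injOn
      intro s hs s' hs' h
      have h0 : s 0 = s' 0 := by
        rw [(Finset.mem_filter.mp hs).2, (Finset.mem_filter.mp hs').2]
      calc s = Fin.cons (s 0) (Fin.tail s) := (Fin.cons_self_tail s).symm
        _ = Fin.cons (s' 0) (Fin.tail s') := by rw [h, h0]
        _ = s' := Fin.cons_self_tail s'
    set B : Finset (Fin k → ℤ) := box N k with hBdef
    have hBcard : B.card = N ^ k := box_card N k (by omega)
    have hsum1 : ∑ a ∈ B, (Sa a).card = S.card := by
      rw [Finset.sum_congr rfl (fun a _ => hSacard a)]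
      exact (Finset.card_eq_sum_card_fiberwise (fun s hs => by
        have := hSP hs; rw [PB, Fintype.mem_piFinset] at this; exact this 0)).symm
    -- counting function D
    set D : (Fin t' → Fin k → ℤ) → ℕ := fun x => (B.filter fun a => x ∈ Sa a).card with hDdef
    have hsum2 : ∑ x ∈ PB N k t', D x = S.card := by
      rw [← hsum1]
      have : ∀ x, D x = ∑ a ∈ B, if x ∈ Sa a then 1 else 0 := by
        intro x; rw [hDdef]; exact Finset.card_filter _ _
      rw [Finset.sum_congr rfl (fun x _ => this x), Finset.sum_comm]
      refine Finset.sum_congr rfl (fun a _ => ?_)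
      rw [← Finset.card_filter, Finset.filter_mem_eq_inter,
        Finset.inter_eq_right.mpr (hSaPB a)]
    have hIcard : ∀ a b : Fin k → ℤ, (Sa a ∩ Sa b).card
        = ∑ x ∈ PB N k t', (if x ∈ Sa a then 1 else 0) * (if x ∈ Sa b then 1 else 0) := by
      intro a b
      have hsub : Sa a ∩ Sa b ⊆ PB N k t' := Finset.inter_subset_left.trans (hSaPB a)
      have : Sa a ∩ Sa b = (PB N k t').filter (fun x => x ∈ Sa a ∧ x ∈ Sa b) := by
        ext x
        simp only [Finset.mem_filter, Finset.mem_inter]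
        exact ⟨fun h => ⟨hsub (Finset.mem_inter.mpr h), h⟩, fun h => h.2⟩
      rw [this, Finset.card_filter]
      refine Finset.sum_congr rfl (fun x _ => ?_)
      by_cases hA : x ∈ Sa a <;> by_cases hB : x ∈ Sa b <;> simp [hA, hB]
    have hsum3 : ∑ p ∈ B ×ˢ B, (Sa p.1 ∩ Sa p.2).card = ∑ x ∈ PB N k t', D x * D x := by
      rw [Finset.sum_product]
      calc ∑ a ∈ B, ∑ b ∈ B, (Sa a ∩ Sa b).card
          = ∑ a ∈ B, ∑ x ∈ PB N k t', (if x ∈ Sa a then 1 else 0) * D x := by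
            refine Finset.sum_congr rfl (fun a _ => ?_)
            rw [Finset.sum_congr rfl (fun b (_ : b ∈ B) => hIcard a b), Finset.sum_comm]
            refine Finset.sum_congr rfl (fun x _ => ?_)
            rw [← Finset.mul_sum]
            congr 1
            rw [hDdef]; exact (Finset.card_filter _ _).symm
        _ = ∑ x ∈ PB N k t', D x * D x := by
            rw [Finset.sum_comm]
            refine Finset.sum_congr rfl (fun x _ => ?_)
            rw [← Finset.sum_mul]
            congr 1
            rw [hDdef]; exact (Finset.card_filter _ _).symm
    have hdiag : ∑ p ∈ (B ×ˢ B).filter (fun p => p.1 = p.2), (Sa p.1 ∩ Sa p.2).card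
        = S.card := by
      rw [Finset.sum_filter, Finset.sum_product]
      have : ∀ a ∈ B, (∑ b ∈ B, if a = b then (Sa a ∩ Sa b).card else 0) = (Sa a).card := by
        intro a ha
        rw [Finset.sum_ite_eq B a (fun b => (Sa a ∩ Sa b).card), if_pos ha, Finset.inter_self]
      rw [Finset.sum_congr rfl this, hsum1]

    -- real quantities
    set T := (B ×ˢ B).filter (fun p => p.1 ≠ p.2) with hTdef
    set sig : ℝ := (S.card : ℝ) with hsigdef
    have hsiglb : γ * Q ^ (t' + 1) ≤ sig := by
      have := hcard
      rwa [hQdef] at this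
    have hsigpos : 0 < sig := lt_of_lt_of_le (by positivity) hsiglb
    have hsigub : sig ≤ Q ^ (t' + 1) := by
      have h1 : S.card ≤ (N ^ k) ^ (t' + 1) := by
        rw [← PB_card N k (t' + 1) (by omega)]
        exact Finset.card_le_card hSP
      have h2 : (S.card : ℝ) ≤ ((N:ℝ) ^ k) ^ (t' + 1) := by exact_mod_cast h1
      exact h2
      
    have hCS : sig ^ 2 ≤ Q ^ t' * ∑ x ∈ PB N k t', (D x : ℝ) ^ 2 := by
      have h1 := sq_sum_le_card_mul_sum_sq (s := PB N k t') (f := fun x => (D x : ℝ))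
      have h2 : ∑ x ∈ PB N k t', (D x : ℝ) = sig := by
        rw [hsigdef, ← hsum2]
        push_cast
        rfl
      have h3 : ((PB N k t').card : ℝ) = Q ^ t' := by
        rw [PB_card N k t' (by omega), hQdef]
        push_cast
        ring
      rw [h2, h3] at h1
      exact h1
    have htot : (∑ p ∈ T, ((Sa p.1 ∩ Sa p.2).card : ℝ))
        = (∑ x ∈ PB N k t', (D x : ℝ) ^ 2) - sig := by
      have h0 := Finset.sum_filter_add_sum_filter_not (B ×ˢ B) (fun p => p.1 = p.2)
        (fun p => ((Sa p.1 ∩ Sa p.2).card : ℝ))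
      have h1 : ∑ p ∈ (B ×ˢ B).filter (fun p => p.1 = p.2), ((Sa p.1 ∩ Sa p.2).card : ℝ)
          = sig := by
        rw [hsigdef, ← hdiag]; push_cast; rfl
      have h2 : ∑ p ∈ B ×ˢ B, ((Sa p.1 ∩ Sa p.2).card : ℝ)
          = ∑ x ∈ PB N k t', (D x : ℝ) ^ 2 := by
        have := hsum3
        have h3 : ((∑ p ∈ B ×ˢ B, (Sa p.1 ∩ Sa p.2).card : ℕ) : ℝ)
            = ((∑ x ∈ PB N k t', D x * D x : ℕ) : ℝ) := by exact_mod_cast this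
        push_cast at h3
        rw [h3]
        refine Finset.sum_congr rfl (fun x _ => ?_)
        ring
      rw [← h2, ← h1, ← h0]
      ring
    -- γ² Q ≥ 4
    have hQE : (4:ℝ) ≤ γ ^ 2 * Q := by
      have hE0 : (2:ℕ) ^ m ≠ 0 := by positivity
      have h1 : ((2:ℝ) ^ 2) ^ (2 ^ m) ≤ (γ ^ 2 * Q) ^ (2 ^ m) := by
        have ha : (2:ℝ) ^ (2 ^ (m + 1)) = ((2:ℝ) ^ 2) ^ (2 ^ m) := by
          rw [← pow_mul]
          congr 1
          rw [pow_succ]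
          ring
        have hb : γ ^ (2 ^ (m + 1)) = (γ ^ 2) ^ (2 ^ m) := by
          rw [← pow_mul]
          congr 1
          rw [pow_succ]
          ring
        have hQQ : Q ≤ Q ^ (2 ^ m) := le_self_pow₀ hQ1 hE0
        calc ((2:ℝ) ^ 2) ^ (2 ^ m) = (2:ℝ) ^ (2 ^ (m + 1)) := ha.symm
          _ ≤ γ ^ (2 ^ (m + 1)) * Q := hcond
          _ = (γ ^ 2) ^ (2 ^ m) * Q := by rw [hb]
          _ ≤ (γ ^ 2) ^ (2 ^ m) * Q ^ (2 ^ m) := by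
              refine mul_le_mul_of_nonneg_left hQQ (by positivity)
          _ = (γ ^ 2 * Q) ^ (2 ^ m) := (mul_pow _ _ _).symm
      have := pow_le_pow_left₀ (by norm_num : (0:ℝ) ≤ 2 ^ 2) (le_refl ((2:ℝ)^2)) 1
      have h4 : (0:ℝ) ≤ (2:ℝ) ^ 2 := by norm_num
      have h5 : (0:ℝ) ≤ γ ^ 2 * Q := by positivity
      have := (pow_le_pow_iff_left₀ h4 h5 hE0).mp h1
      linarith [this]
    set γ' : ℝ := γ ^ 2 / 2 with hγ'def
    have hγ'pos : 0 < γ' := by positivity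
    -- lower bound on off-diagonal sum
    have hTlb : γ' * Q ^ (t' + 2) ≤ ∑ p ∈ T, ((Sa p.1 ∩ Sa p.2).card : ℝ) := by
      rw [htot]
      have hq : (0:ℝ) < Q ^ t' := by positivity
      have h1 : γ ^ 2 * Q ^ (t' + 2) ≤ sig ^ 2 / Q ^ t' := by
        rw [le_div_iff₀ hq]
        have : γ * Q ^ (t' + 1) * (γ * Q ^ (t' + 1)) ≤ sig * sig :=
          mul_le_mul hsiglb hsiglb (by positivity) (le_of_lt hsigpos)
        calc γ ^ 2 * Q ^ (t' + 2) * Q ^ t' = (γ * Q ^ (t' + 1)) * (γ * Q ^ (t' + 1)) := by ring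
          _ ≤ sig * sig := this
          _ = sig ^ 2 := by ring
      have h2 : sig ^ 2 / Q ^ t' ≤ ∑ x ∈ PB N k t', (D x : ℝ) ^ 2 := by
        rw [div_le_iff₀ hq]
        calc sig ^ 2 ≤ Q ^ t' * ∑ x ∈ PB N k t', (D x : ℝ) ^ 2 := hCS
          _ = (∑ x ∈ PB N k t', (D x : ℝ) ^ 2) * Q ^ t' := by ring
      have h3 : γ' * Q ^ (t' + 2) + Q ^ (t' + 1) ≤ γ ^ 2 * Q ^ (t' + 2) := by
        have hQpow : Q ^ (t' + 2) = Q * Q ^ (t' + 1) := by ring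
        have h5 : (0:ℝ) < Q ^ (t' + 1) := by positivity
        have h6 : (2:ℝ) ≤ γ ^ 2 * Q / 2 := by linarith
        calc γ' * Q ^ (t' + 2) + Q ^ (t' + 1)
            = (γ ^ 2 / 2) * Q ^ (t' + 2) + Q ^ (t' + 1) := by rw [hγ'def]
          _ ≤ (γ ^ 2 / 2) * Q ^ (t' + 2) + (γ ^ 2 * Q / 2) * Q ^ (t' + 1) := by nlinarith
          _ = γ ^ 2 * Q ^ (t' + 2) := by ring
      linarith
    -- extract a good off-diagonal pair
    obtain ⟨p, hpT, hpcard⟩ : ∃ p ∈ T, γ' * Q ^ t' ≤ ((Sa p.1 ∩ Sa p.2).card : ℝ) := by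
      by_contra hcon
      push_neg at hcon
      have hTne : T.Nonempty := by
        rcases T.eq_empty_or_nonempty with he | hne
        · exfalso
          rw [he] at hTlb
          simp at hTlb
          have : (0:ℝ) < γ' * Q ^ (t' + 2) := by positivity
          linarith
        · exact hne
      have hlt : ∑ p ∈ T, ((Sa p.1 ∩ Sa p.2).card : ℝ) < ∑ _p ∈ T, γ' * Q ^ t' :=
        Finset.sum_lt_sum_of_nonempty hTne hcon
      have hTcard : (T.card : ℝ) ≤ Q ^ 2 := by
        have h1 : T.card ≤ (B ×ˢ B).card := Finset.card_filter_le _ _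
        have h2 : (B ×ˢ B).card = (N ^ k) * (N ^ k) := by
          rw [Finset.card_product, hBcard]
        have : (T.card : ℝ) ≤ ((N ^ k : ℕ) : ℝ) * ((N ^ k : ℕ) : ℝ) := by
          exact_mod_cast le_trans h1 (le_of_eq h2)
        calc (T.card : ℝ) ≤ ((N ^ k : ℕ) : ℝ) * ((N ^ k : ℕ) : ℝ) := this
          _ = Q * Q := by rw [hQdef]; push_cast; ring
          _ = Q ^ 2 := by ring
      have : ∑ _p ∈ T, γ' * Q ^ t' = T.card * (γ' * Q ^ t') := by
        rw [Finset.sum_const, nsmul_eq_mul]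
      rw [this] at hlt
      have h9 : (T.card : ℝ) * (γ' * Q ^ t') ≤ Q ^ 2 * (γ' * Q ^ t') := by
        refine mul_le_mul_of_nonneg_right hTcard (by positivity)
      have h10 : Q ^ 2 * (γ' * Q ^ t') = γ' * Q ^ (t' + 2) := by ring
      linarith

    -- the chosen pair
    obtain ⟨hpBB, hab⟩ := Finset.mem_filter.mp hpT
    obtain ⟨haB, hbB⟩ := Finset.mem_product.mp hpBB
    set a := p.1 with hadef
    set b := p.2 with hbdef
    -- apply IH to the intersection of fibers
    have hcond' : (2:ℝ) ^ (2 ^ m) ≤ γ' ^ (2 ^ m) * Q := by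
      have hE0 : (2:ℕ) ^ m ≠ 0 := by positivity
      have hb : γ ^ (2 ^ (m + 1)) = (γ ^ 2) ^ (2 ^ m) := by
        rw [← pow_mul]; congr 1; rw [pow_succ]; ring
      have ha : (2:ℝ) ^ (2 ^ (m + 1)) = (2:ℝ) ^ (2 ^ m) * (2:ℝ) ^ (2 ^ m) := by
        rw [← pow_add]; congr 1; rw [pow_succ]; ring
      have h1 : γ' ^ (2 ^ m) * Q = (γ ^ 2) ^ (2 ^ m) * Q / 2 ^ (2 ^ m) := by
        rw [hγ'def, div_pow]; ring
      rw [h1, le_div_iff₀ (by positivity)]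
      calc (2:ℝ) ^ (2 ^ m) * (2:ℝ) ^ (2 ^ m) = (2:ℝ) ^ (2 ^ (m + 1)) := ha.symm
        _ ≤ γ ^ (2 ^ (m + 1)) * Q := hcond
        _ = (γ ^ 2) ^ (2 ^ m) * Q := by rw [hb]
    obtain ⟨z', d', hmem', hinj'⟩ := IH t' hmt' γ' hγ'pos hcond' (Sa a ∩ Sa b)
      (Finset.inter_subset_left.trans (hSaPB a)) hpcard
    -- build the new cube

    set z : Fin (t' + 1) → Fin k → ℤ := Fin.cons a z' with hzdef
    set d : Fin (m + 1) → Fin (t' + 1) → Fin k → ℤ :=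
      Fin.cons (Fin.cons (b - a) 0) (fun i => Fin.cons (0 : Fin k → ℤ) (d' i)) with hddef
    have hform : ∀ y : Fin (m + 1) → ℤ,
        z + ∑ i, y i • d i
          = Fin.cons (a + y 0 • (b - a)) (z' + ∑ i, (Fin.tail y) i • d' i) := by
      intro y
      funext q
      refine Fin.cases ?_ ?_ q
      · simp [hzdef, hddef, Fin.sum_univ_succ, Finset.sum_apply, Fin.tail,
          Pi.add_apply, Pi.smul_apply, smul_zero, Finset.sum_const_zero, add_zero]
      · intro j
        simp [hzdef, hddef, Fin.sum_univ_succ, Finset.sum_apply, Fin.tail,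
          Pi.add_apply, Pi.smul_apply, smul_zero, Finset.sum_const_zero, zero_add]
    refine ⟨z, d, ?_, ?_⟩
    · intro y hy
      have hty : Fin.tail y ∈ cube m := fun i => hy i.succ
      have hq := hmem' (Fin.tail y) hty
      rw [hform y]
      rcases hy 0 with h0 | h0
      · rw [h0]
        have he : a + (0:ℤ) • (b - a) = a := by simp
        rw [he]
        exact (hmemSa a _).mp (Finset.mem_inter.mp hq).1
      · rw [h0]
        have he : a + (1:ℤ) • (b - a) = b := by simp
        rw [he]
        exact (hmemSa b _).mp (Finset.mem_inter.mp hq).2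
    · intro y hy y' hy' heq
      simp only at heq
      rw [hform y, hform y'] at heq
      obtain ⟨hhead, htail⟩ := Fin.cons_inj.mp heq
      have h0 : y 0 = y' 0 := by
        rcases hy 0 with h1 | h1 <;> rcases hy' 0 with h2 | h2
        · rw [h1, h2]
        · exfalso
          rw [h1, h2] at hhead
          simp only [zero_smul, one_smul, add_zero] at hhead
          have hba : b - a = 0 := (left_eq_add.mp hhead)
          exact hab (sub_eq_zero.mp hba).symm
        · exfalso
          rw [h1, h2] at hhead
          simp only [zero_smul, one_smul, add_zero] at hhead
          have hba : b - a = 0 := (left_eq_add.mp hhead.symm)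
          exact hab (sub_eq_zero.mp hba).symm
        · rw [h1, h2]
      have htY : Fin.tail y = Fin.tail y' :=
        hinj' (fun i => hy i.succ) (fun i => hy' i.succ) htail
      funext i
      refine Fin.cases ?_ ?_ i
      · exact h0
      · intro j
        exact congrFun htY j

lemma main_cube (N m k r : ℕ) (hN : 2 ≤ N) (hm : 1 ≤ m) (hk : 1 ≤ k) (c : ℝ) (hc : 0 < c)
    (hcond : (2:ℝ)^(2^m) ≤ c^(2^m) * (N:ℝ)^k)
    (S : Finset (Fin (m*k+r) → ℤ)) (hSbox : S ⊆ box N (m*k+r))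
    (hcard : c * (N:ℝ)^(m*k+r) ≤ S.card) : HasCube (↑S : Set (Fin (m*k+r) → ℤ)) m := by
  classical
  have hbox : ∀ x ∈ S, ∀ p : Fin (m*k+r), x p ∈ Finset.Icc (0:ℤ) ((N:ℤ) - 1) := by
    intro x hx p
    have := hSbox hx
    rw [box, Fintype.mem_piFinset] at this
    exact this p
  -- index arithmetic helpers
  have hidx1 : ∀ (i : Fin m) (j : Fin k), k * (i : ℕ) + (j : ℕ) < m*k+r := by
    intro i j
    have h1 : k * (i:ℕ) + (j:ℕ) < k * ((i:ℕ) + 1) := by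
      rw [Nat.mul_add, Nat.mul_one]
      have := j.isLt; omega
    have h2 : k * ((i:ℕ) + 1) ≤ k * m := Nat.mul_le_mul_left k i.isLt
    have h3 : k * m = m * k := Nat.mul_comm k m
    omega
  have hidx2 : ∀ (j : Fin r), m * k + (j:ℕ) < m*k+r := fun j => by have := j.isLt; omega
  set headpart : (Fin (m*k+r) → ℤ) → (Fin m → Fin k → ℤ) :=
    fun x i j => x ⟨k * (i:ℕ) + (j:ℕ), hidx1 i j⟩ with hheaddef
  set tailpart : (Fin (m*k+r) → ℤ) → (Fin r → ℤ) :=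
    fun x j => x ⟨m * k + (j:ℕ), hidx2 j⟩ with htaildef
  -- pick a dense slice
  have htail_mem : ∀ x ∈ S, tailpart x ∈ box N r := by
    intro x hx
    rw [box, Fintype.mem_piFinset]
    intro j
    exact hbox x hx _
  obtain ⟨w, hwbox, hwcard⟩ :
      ∃ w ∈ box N r, c * ((N:ℝ))^(m*k) ≤ ((S.filter fun x => tailpart x = w).card : ℝ) := by
    by_contra hcon
    push_neg at hcon
    have hfib := Finset.card_eq_sum_card_fiberwise htail_mem
    have hboxne : (box N r).Nonempty := by
      rw [← Finset.card_pos, box_card N r (by omega)]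
      positivity
    have hlt : ∑ w ∈ box N r, (((S.filter fun x => tailpart x = w).card : ℝ))
        < ∑ _w ∈ box N r, c * ((N:ℝ))^(m*k) := by
      refine Finset.sum_lt_sum_of_nonempty hboxne ?_
      intro w hw
      exact hcon w hw
    rw [Finset.sum_const, nsmul_eq_mul, box_card N r (by omega)] at hlt
    push_cast at hlt
    have hsum : ∑ w ∈ box N r, (((S.filter fun x => tailpart x = w).card : ℝ)) = S.card := by
      rw [hfib]; push_cast; rfl
    rw [hsum] at hlt
    have : ((N:ℝ))^r * (c * ((N:ℝ))^(m*k)) = c * ((N:ℝ))^(m*k+r) := by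
      push_cast; ring
    rw [this] at hlt
    linarith
  -- the block set
  set S0 : Finset (Fin m → Fin k → ℤ) := (S.filter fun x => tailpart x = w).image headpart
    with hS0def
  have hrecon : ∀ x x', x ∈ S.filter (fun x => tailpart x = w) →
      x' ∈ S.filter (fun x => tailpart x = w) → headpart x = headpart x' → x = x' := by
    intro x x' hx hx' h
    obtain ⟨hxS, hxw⟩ := Finset.mem_filter.mp hx
    obtain ⟨hx'S, hx'w⟩ := Finset.mem_filter.mp hx'
    funext p
    by_cases hp : (p : ℕ) < m * k
    · have hdiv : (p : ℕ) / k < m := by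
        rw [Nat.div_lt_iff_lt_mul (by omega)]
        omega
      have hmod : (p : ℕ) % k < k := Nat.mod_lt _ (by omega)
      have hx1 : x p = headpart x ⟨(p:ℕ)/k, hdiv⟩ ⟨(p:ℕ)%k, hmod⟩ := by
        rw [hheaddef]
        congr 1
        rw [Fin.ext_iff]
        simp only [Fin.val_mk]
        have := Nat.div_add_mod (p:ℕ) k
        omega
      have hx2 : x' p = headpart x' ⟨(p:ℕ)/k, hdiv⟩ ⟨(p:ℕ)%k, hmod⟩ := by
        rw [hheaddef]
        congr 1
        rw [Fin.ext_iff]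
        simp only [Fin.val_mk]
        have := Nat.div_add_mod (p:ℕ) k
        omega
      rw [hx1, hx2, h]
    · have hple : m * k ≤ (p:ℕ) := le_of_not_gt hp
      have hplt : (p:ℕ) - m * k < r := by have := p.isLt; omega
      have hx1 : x p = tailpart x ⟨(p:ℕ) - m * k, hplt⟩ := by
        rw [htaildef]
        congr 1
        rw [Fin.ext_iff]
        simp only [Fin.val_mk]
        have := Nat.div_add_mod (p:ℕ) k
        omega
      have hx2 : x' p = tailpart x' ⟨(p:ℕ) - m * k, hplt⟩ := by
        rw [htaildef]
        congr 1
        rw [Fin.ext_iff]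
        simp only [Fin.val_mk]
        have := Nat.div_add_mod (p:ℕ) k
        omega
      rw [hx1, hx2, hxw, hx'w]
  have hS0card : c * (((N:ℝ))^k)^m ≤ (S0.card : ℝ) := by
    have : S0.card = (S.filter fun x => tailpart x = w).card :=
      Finset.card_image_of_injOn (fun x hx x' hx' h => hrecon x x' hx hx' h)
    rw [this]
    calc c * (((N:ℝ))^k)^m = c * ((N:ℝ))^(m*k) := by rw [← pow_mul, Nat.mul_comm k m]
      _ ≤ _ := hwcard
  have hS0sub : S0 ⊆ PB N k m := by
    intro u hu
    obtain ⟨x, hx, rfl⟩ := Finset.mem_image.mp hu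
    rw [PB, Fintype.mem_piFinset]
    intro i
    rw [box, Fintype.mem_piFinset]
    intro j
    exact hbox x (Finset.mem_filter.mp hx).1 _
  obtain ⟨z, d, hmem, hinj⟩ := core N k hN hk m m le_rfl c hc hcond S0 hS0sub hS0card
  -- embed back
  set Emb : (Fin m → Fin k → ℤ) → (Fin (m*k+r) → ℤ) := fun u p =>
    if hp : (p : ℕ) < m * k then
      u ⟨(p:ℕ)/k, by rw [Nat.div_lt_iff_lt_mul (by omega)]; omega⟩
        ⟨(p:ℕ)%k, Nat.mod_lt _ (by omega)⟩
    else w ⟨(p:ℕ) - m * k, by have := p.isLt; omega⟩ with hEmbdef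
  have hEmbinj : Function.Injective Emb := by
    intro u u' h
    funext i j
    have hlt : k * (i:ℕ) + (j:ℕ) < m * k := by
      have h1 : k * (i:ℕ) + (j:ℕ) < k * ((i:ℕ) + 1) := by
        rw [Nat.mul_add, Nat.mul_one]
        have := j.isLt; omega
      have h2 : k * ((i:ℕ) + 1) ≤ k * m := Nat.mul_le_mul_left k i.isLt
      have h3 : k * m = m * k := Nat.mul_comm k m
      omega
    have := congrFun h ⟨k * (i:ℕ) + (j:ℕ), by omega⟩
    rw [hEmbdef] at this
    simp only [dif_pos hlt] at this
    have hdiv : (k * (i:ℕ) + (j:ℕ)) / k = (i:ℕ) := by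
      rw [Nat.mul_add_div (by omega)]
      simp [Nat.div_eq_of_lt j.isLt]
    have hmod : (k * (i:ℕ) + (j:ℕ)) % k = (j:ℕ) := by
      rw [Nat.mul_add_mod]
      exact Nat.mod_eq_of_lt j.isLt
    convert this using 2 <;> exact (Fin.ext (by simp [hdiv, hmod])).symm
  have hEmbS : ∀ u ∈ S0, Emb u ∈ S := by
    intro u hu
    obtain ⟨x, hx, rfl⟩ := Finset.mem_image.mp hu
    obtain ⟨hxS, hxw⟩ := Finset.mem_filter.mp hx
    have : Emb (headpart x) = x := by
      funext p
      rw [hEmbdef]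
      by_cases hp : (p : ℕ) < m * k
      · simp only [dif_pos hp]
        simp only [hheaddef]
        congr 1
        rw [Fin.ext_iff]
        simp only [Fin.val_mk]
        have := Nat.div_add_mod (p:ℕ) k
        omega
      · simp only [dif_neg hp]
        rw [← hxw]
        simp only [htaildef]
        congr 1
        rw [Fin.ext_iff]
        simp only [Fin.val_mk]
        have := Nat.div_add_mod (p:ℕ) k
        omega
    rw [this]
    exact hxS
  -- assemble HasCube
  refine ⟨fun y => Emb (z + ∑ i, y i • d i), ?_, ?_, ?_⟩
  · -- affine form
    refine ⟨Matrix.of (fun p i => if hp : (p : ℕ) < m * k then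
      d i ⟨(p:ℕ)/k, by rw [Nat.div_lt_iff_lt_mul (by omega)]; omega⟩
        ⟨(p:ℕ)%k, Nat.mod_lt _ (by omega)⟩ else 0), Emb z, ?_⟩
    intro y _
    funext p
    rw [Pi.add_apply, Matrix.mulVec, dotProduct]
    rw [hEmbdef]
    by_cases hp : (p : ℕ) < m * k
    · simp only [dif_pos hp, Matrix.of_apply, Pi.add_apply, Finset.sum_apply, Pi.smul_apply,
        smul_eq_mul]
      rw [add_comm]
      congr 1
      exact Finset.sum_congr rfl (fun i _ => by ring)
    · simp only [dif_neg hp, Matrix.of_apply]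
      simp
  · -- injectivity
    intro y hy y' hy' h
    simp only at h
    have := hEmbinj h
    exact hinj hy hy' this
  · -- image
    rintro v ⟨y, hy, rfl⟩
    simpa using hEmbS _ (hmem y hy)

/-- the cube as a finset -/
def cubeF (m : ℕ) : Finset (Fin m → ℤ) := Fintype.piFinset fun _ => ({0, 1} : Finset ℤ)

lemma cubeF_coe (m : ℕ) : ∀ x, x ∈ cubeF m ↔ x ∈ cube m := by
  intro x
  rw [cubeF, Fintype.mem_piFinset]
  constructor
  · intro h i; have := h i; simpa using this
  · intro h i; simpa using h i

lemma cubeF_card (m : ℕ) : (cubeF m).card = 2 ^ m := by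
  rw [cubeF, Fintype.card_piFinset]
  have : ({0, 1} : Finset ℤ).card = 2 := by decide
  simp [this]

lemma Mval_ge {n : ℕ} (S : Finset (Fin n → ℤ)) {m : ℕ}
    (h : HasCube (↑S : Set (Fin n → ℤ)) m) : m ≤ Mval (↑S : Set (Fin n → ℤ)) := by
  have hcard : ∀ m' : ℕ, HasCube (↑S : Set (Fin n → ℤ)) m' → 2 ^ m' ≤ S.card := by
    intro m' ⟨ι, _, hinj, himg⟩
    have h1 : (cubeF m').card ≤ S.card := by
      apply Finset.card_le_card_of_injOn ι
      · intro a ha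
        have : ι a ∈ (↑S : Set (Fin n → ℤ)) := himg ⟨a, (cubeF_coe m' a).mp ha, rfl⟩
        exact_mod_cast this
      · intro a ha b hb hab
        exact hinj ((cubeF_coe m' a).mp ha) ((cubeF_coe m' b).mp hb) hab
    rwa [cubeF_card] at h1
  have hbdd : BddAbove {m' | HasCube (↑S : Set (Fin n → ℤ)) m'} := by
    refine ⟨S.card, ?_⟩
    intro m' hm'
    have := hcard m' hm'
    have h2 := Nat.lt_two_pow_self (n := m')
    omega
  exact le_csSup hbdd h

lemma Mval_box_mem (N n : ℕ) (hN : 2 ≤ N) (c : ℝ) (hc : c ≤ 1) :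
    ∃ S : Finset (Fin n → ℤ), S ⊆ box N n ∧ c * (N : ℝ) ^ n ≤ S.card ∧
      Mval ((box N n : Finset (Fin n → ℤ)) : Set (Fin n → ℤ)) =
        Mval ((box N n : Finset (Fin n → ℤ)) : Set (Fin n → ℤ)) := by
  refine ⟨box N n, subset_rfl, ?_, rfl⟩
  rw [box_card N n (by omega)]
  have h1 : ((N:ℝ))^n = ((N^n : ℕ) : ℝ) := by push_cast; ring
  nlinarith [pow_pos (show (0:ℝ) < N by exact_mod_cast Nat.lt_of_lt_of_le Nat.zero_lt_two hN) n]

lemma fN_ge (N m k r : ℕ) (hN : 2 ≤ N) (hm : 1 ≤ m) (hk : 1 ≤ k) (c : ℝ)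
    (hc0 : 0 < c) (hc1 : c ≤ 1)
    (hcond : (2:ℝ)^(2^m) ≤ c^(2^m) * (N:ℝ)^k) : m ≤ fN N (m*k+r) c := by
  rw [fN]
  set K := {j | ∃ S : Finset (Fin (m*k+r) → ℤ), S ⊆ box N (m*k+r) ∧
    c * (N : ℝ) ^ (m*k+r) ≤ S.card ∧ Mval (S : Set (Fin (m*k+r) → ℤ)) = j} with hKdef
  have hKne : K.Nonempty := by
    refine ⟨Mval ((box N (m*k+r) : Finset _) : Set (Fin (m*k+r) → ℤ)),
      box N (m*k+r), subset_rfl, ?_, rfl⟩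
    rw [box_card N (m*k+r) (by omega)]
    have h1 : ((N:ℝ))^(m*k+r) = ((N^(m*k+r) : ℕ) : ℝ) := by push_cast; ring
    nlinarith [pow_pos (show (0:ℝ) < (N:ℝ) by exact_mod_cast Nat.lt_of_lt_of_le Nat.zero_lt_two hN) (m*k+r)]
  have hmem := Nat.sInf_mem hKne
  obtain ⟨S, hsub, hcrd, hMv⟩ := hmem
  have hcube := main_cube N m k r hN hm hk c hc0 hcond S hsub hcrd
  have := Mval_ge S hcube
  rw [hMv] at this
  exact this


theorem stmt14 (N : ℕ) (hN : 2 ≤ N) (c : ℕ → ℝ) (hc : ∀ n, 0 < c n ∧ c n ≤ 1)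
    (hlim : Filter.Tendsto (fun n : ℕ => (c n) ^ ((n : ℝ)⁻¹)) Filter.atTop (nhds 1)) :
    Filter.Tendsto (fun n : ℕ => fN N n (c n)) Filter.atTop Filter.atTop := by

  rw [Filter.tendsto_atTop]
  intro b
  set m := max b 1 with hmdef
  have hm1 : 1 ≤ m := le_max_right _ _
  have hbm : b ≤ m := le_max_left _ _
  have hMpos : (0:ℝ) < (m:ℝ) := by exact_mod_cast hm1
  set θ : ℝ := (2:ℝ) ^ (-(1 / ((2:ℝ)^(m+1) * (m:ℝ))) : ℝ) with hθdef
  have hθpos : 0 < θ := Real.rpow_pos_of_pos two_pos _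
  have hθlt1 : θ < 1 := by
    rw [hθdef]
    apply Real.rpow_lt_one_of_one_lt_of_neg one_lt_two
    have h1 : (0:ℝ) < (2:ℝ)^(m+1) * (m:ℝ) := by positivity
    have h2 : (0:ℝ) < 1 / ((2:ℝ)^(m+1) * (m:ℝ)) := by positivity
    linarith
  have hev1 : ∀ᶠ n in Filter.atTop, θ < c n ^ ((n:ℝ)⁻¹) :=
    hlim.eventually (eventually_gt_nhds hθlt1)
  have hev2 : ∀ᶠ n in Filter.atTop, 2*m*(2^m+1) ≤ n := Filter.eventually_ge_atTop _
  filter_upwards [hev1, hev2] with n hβ hn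
  -- basic facts about n
  have hnm : m ≤ n := by
    have h1 : m ≤ 2*m*(2^m+1) := by nlinarith [Nat.one_le_two_pow (n := m)]
    omega
  have hn1 : 1 ≤ n := le_trans hm1 hnm
  set k := n / m with hkdef
  have hk1 : 1 ≤ k := (Nat.one_le_div_iff (by omega)).mpr hnm
  have hc0 : 0 < c n := (hc n).1
  -- c n ≥ θ ^ n
  have hcn_ge : θ ^ n ≤ c n := by
    have h1 : (c n ^ ((n:ℝ)⁻¹)) ^ (n:ℕ) = c n := by
      rw [← Real.rpow_natCast (c n ^ ((n:ℝ)⁻¹)) n, ← Real.rpow_mul (le_of_lt hc0),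
        inv_mul_cancel₀ (by positivity : ((n:ℝ)) ≠ 0), Real.rpow_one]
    calc θ ^ n ≤ (c n ^ ((n:ℝ)⁻¹)) ^ n :=
          pow_le_pow_left₀ (le_of_lt hθpos) (le_of_lt hβ) n
      _ = c n := h1
  -- θ ^ (n * 2^m) = 2 ^ (-(n:ℝ)/(2*m))
  have hθn : θ ^ (n * 2^m) = (2:ℝ) ^ (-((n:ℝ)/(2*(m:ℝ)))) := by
    rw [hθdef, ← Real.rpow_natCast ((2:ℝ) ^ (-(1 / ((2:ℝ)^(m+1) * (m:ℝ))) : ℝ)) (n * 2^m),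
      ← Real.rpow_mul (by norm_num : (0:ℝ) ≤ 2)]
    congr 1
    have h2m : ((2:ℝ))^(m+1) = 2 * (2:ℝ)^m := by rw [pow_succ]; ring
    have hpow : (0:ℝ) < (2:ℝ)^m := by positivity
    push_cast
    rw [h2m]
    field_simp
  -- key exponent inequality
  have hklb : (n:ℝ) < (m:ℝ) * (k:ℝ) + (m:ℝ) := by
    have h1 : n < m * k + m := by
      have hdm : m * k + n % m = n := Nat.div_add_mod n m
      have := Nat.mod_lt n (show 0 < m by omega)
      omega
    exact_mod_cast h1
  have hnlb : 2*(m:ℝ)*((2:ℝ)^m+1) ≤ (n:ℝ) := by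
    have h1 : ((2*m*(2^m+1) : ℕ) : ℝ) ≤ (n:ℝ) := by exact_mod_cast hn
    push_cast at h1
    linarith
  have hexp : ((2:ℝ)^m) ≤ (k:ℝ) - (n:ℝ)/(2*(m:ℝ)) := by
    have h2 : (n:ℝ)/(2*(m:ℝ)) ≤ (k:ℝ) - 2^m := by
      rw [div_le_iff₀ (by positivity)]
      nlinarith [hklb, hnlb]
    linarith
  -- the main condition
  have hcond : (2:ℝ)^(2^m) ≤ (c n)^(2^m) * (N:ℝ)^k := by
    have e1 : (2:ℝ) ^ (-((n:ℝ)/(2*(m:ℝ)))) ≤ (c n)^(2^m) := by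
      rw [← hθn]
      calc θ ^ (n * 2^m) = (θ ^ n) ^ (2^m) := by rw [pow_mul]
        _ ≤ (c n) ^ (2^m) := pow_le_pow_left₀ (by positivity) hcn_ge _
    have e2 : (2:ℝ) ^ ((k:ℕ):ℝ) ≤ (N:ℝ)^k := by
      rw [Real.rpow_natCast]
      exact pow_le_pow_left₀ (by norm_num) (by exact_mod_cast hN) k
    calc (2:ℝ)^(2^m) = (2:ℝ)^(((2^m : ℕ)):ℝ) := by rw [Real.rpow_natCast]
      _ ≤ (2:ℝ)^(-((n:ℝ)/(2*(m:ℝ))) + ((k:ℕ):ℝ)) := by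
          apply Real.rpow_le_rpow_of_exponent_le one_le_two
          have : ((2^m : ℕ) : ℝ) = (2:ℝ)^m := by push_cast; ring
          rw [this]
          linarith [hexp]
      _ = (2:ℝ) ^ (-((n:ℝ)/(2*(m:ℝ)))) * (2:ℝ) ^ ((k:ℕ):ℝ) := Real.rpow_add two_pos _ _
      _ ≤ (c n)^(2^m) * (N:ℝ)^k := by
          apply mul_le_mul e1 e2 (by positivity) (by positivity)
  -- conclusion
  have hfn : m ≤ fN N (m * k + (n % m)) (c n) :=
    fN_ge N m k (n % m) hN hm1 hk1 (c n) hc0 (hc n).2 hcond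
  have hnk : m * k + (n % m) = n := Nat.div_add_mod n m
  rw [hnk] at hfn
  omega
end
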